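/- Let R be a commutative ring and n ≥ 1. If S is a subring of the matrix ring M_n(R) containing all scalar matrices rI with r ∈ R, then S ∩ U(M_n(R)) = U(S); that is, every matrix in S invertible in M_n(R) has its inverse in S. -/

import Mathlib

lemma smul_mem_aux {R : Type*} [CommRing R] {n : ℕ}
    (S : Subring (Matrix (Fin n) (Fin n) R))
    (hscal : ∀ r : R, r • (1 : Matrix (Fin n) (Fin n) R) ∈ S)
    (r : R) {M : Matrix (Fin n) (Fin n) R} (hM : M ∈ S) : r • M ∈ S := by
  have : r • M = (r • (1 : Matrix (Fin n) (Fin n) R)) * M := by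
    rw [smul_mul_assoc, one_mul]
  rw [this]
  exact S.mul_mem (hscal r) hM

/-- Let `R` be a commutative ring and `n ≥ 1`. If `S` is a subring of `Mₙ(R)` containing
all scalar matrices `r • I` with `r ∈ R`, then every matrix in `S` invertible in `Mₙ(R)`
has its inverse in `S` (i.e. `S ∩ U(Mₙ(R)) = U(S)`). -/
theorem stmt_9 {R : Type*} [CommRing R]
    (n : ℕ) (hn : 1 ≤ n)
    (S : Subring (Matrix (Fin n) (Fin n) R))
    (hscal : ∀ r : R, r • (1 : Matrix (Fin n) (Fin n) R) ∈ S)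
    (A : (Matrix (Fin n) (Fin n) R)ˣ) (hA : A.val ∈ S) :
    (A⁻¹).val ∈ S := by
  set M := A.val with hM
  set p := M.charpoly with hp
  set c0 := p.coeff 0 with hc0
  -- c0 is a unit since det M is a unit
  have hdetU : IsUnit M.det := (Matrix.isUnit_iff_isUnit_det M).mp A.isUnit
  have hdet : M.det = (-1) ^ n * c0 := by
    simpa [Fintype.card_fin] using Matrix.det_eq_sign_charpoly_coeff M
  have hc0U : IsUnit c0 := by
    have := hdetU
    rw [hdet] at this
    exact (IsUnit.mul_iff.mp this).2
  obtain ⟨u, hu⟩ := hc0U.neg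
  -- Cayley–Hamilton
  have hch : Polynomial.aeval M p = 0 := Matrix.aeval_self_charpoly M
  have hsplit : Polynomial.aeval M (p.divX) * M + c0 • (1 : Matrix (Fin n) (Fin n) R) = 0 := by
    have := congrArg (Polynomial.aeval M) (Polynomial.divX_mul_X_add p)
    rw [map_add, map_mul, Polynomial.aeval_X, Polynomial.aeval_C] at this
    rw [hch] at this
    rw [← this]
    congr 1
    simp [Algebra.algebraMap_eq_smul_one, hc0]
  set B := Polynomial.aeval M (p.divX) with hB
  have hBS : B ∈ S := by
    rw [hB, Polynomial.aeval_eq_sum_range]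
    exact S.sum_mem fun i _ => smul_mem_aux S hscal _ (S.pow_mem hA i)
  -- the inverse is ((-c0)⁻¹) • B
  have hinv : ((↑u⁻¹ : R) • B) * M = 1 := by
    have h1 : B * M = (-c0) • (1 : Matrix (Fin n) (Fin n) R) := by
      have := hsplit
      rw [add_eq_zero_iff_eq_neg] at this
      rw [this, neg_smul]
    rw [smul_mul_assoc, h1, smul_smul, ← hu, Units.inv_mul, one_smul]
  have : (↑u⁻¹ : R) • B = (A⁻¹).val := by
    exact Units.inv_eq_of_mul_eq_one_left hinv ▸ rfl
  rw [← this]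
  exact smul_mem_aux S hscal _ hBS
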